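/- For every n ≥ 1, the infimum of 2( Σ_{y=0}^{n−1} h_y + Σ_{x=0}^{n−1} v_x + Σ_{c=−(n−1)}^{n−1} λ⁺_c + Σ_{c=0}^{2n−2} λ⁻_c ), taken over all nonnegative real weights h, v, λ⁺, λ⁻ satisfying h_y + v_x + λ⁺_{x−y} + λ⁻_{x+y} ≥ 1 for every point (x,y) of the full grid G_n, equals 2n. (The upper bound is attained by h_y = v_x = 1/2 and λ⁺ = λ⁻ = 0, and the lower bound follows by pairing any feasible weighting with the constant fractional assignment z_{x,y} = 2/n.) -/

import Mathlib

lemma sum_shift (f : ℤ → ℝ) (a b c : ℤ) :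
    ∑ x ∈ Finset.Icc a b, f (x + c) = ∑ x ∈ Finset.Icc (a + c) (b + c), f x := by
  rw [← Finset.image_add_right_Icc a b c, Finset.sum_image]
  intro x _ y _ hxy
  exact add_right_cancel hxy

/-- For the full `n × n` grid, the four-direction dual LP (rows, columns and the two
diagonal families of slopes `±1`, with the covering condition
`h_y + v_x + λ⁺_{x−y} + λ⁻_{x+y} ≥ 1` at every grid point) has infimum value `2n`. -/
theorem full_grid_four_direction_dual_value (n : ℕ) (hn : 1 ≤ n) :
    IsGLB {t : ℝ | ∃ h v lp lm : ℤ → ℝ,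
      (∀ y ∈ Finset.Icc (0 : ℤ) ((n : ℤ) - 1), 0 ≤ h y) ∧
      (∀ x ∈ Finset.Icc (0 : ℤ) ((n : ℤ) - 1), 0 ≤ v x) ∧
      (∀ c ∈ Finset.Icc (-((n : ℤ) - 1)) ((n : ℤ) - 1), 0 ≤ lp c) ∧
      (∀ c ∈ Finset.Icc (0 : ℤ) (2 * (n : ℤ) - 2), 0 ≤ lm c) ∧
      (∀ x y : ℤ, 0 ≤ x → x ≤ (n : ℤ) - 1 → 0 ≤ y → y ≤ (n : ℤ) - 1 →
        1 ≤ h y + v x + lp (x - y) + lm (x + y)) ∧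
      t = 2 * ((∑ y ∈ Finset.Icc (0 : ℤ) ((n : ℤ) - 1), h y)
        + (∑ x ∈ Finset.Icc (0 : ℤ) ((n : ℤ) - 1), v x)
        + (∑ c ∈ Finset.Icc (-((n : ℤ) - 1)) ((n : ℤ) - 1), lp c)
        + (∑ c ∈ Finset.Icc (0 : ℤ) (2 * (n : ℤ) - 2), lm c))}
      (2 * n : ℝ) := by
  have hcard : (Finset.Icc (0 : ℤ) ((n : ℤ) - 1)).card = n := by
    rw [Int.card_Icc]; omega
  have hnpos : (0 : ℝ) < n := by exact_mod_cast hn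
  constructor
  · -- lower bound
    rintro t ⟨h, v, lp, lm, hh, hv, hlp, hlm, hc, rfl⟩
    set I : Finset ℤ := Finset.Icc (0 : ℤ) ((n : ℤ) - 1) with hI
    set Sh := ∑ y ∈ I, h y
    set Sv := ∑ x ∈ I, v x
    set Sp := ∑ c ∈ Finset.Icc (-((n : ℤ) - 1)) ((n : ℤ) - 1), lp c
    set Sm := ∑ c ∈ Finset.Icc (0 : ℤ) (2 * (n : ℤ) - 2), lm c
    have key : (n : ℝ) * n ≤ n * (Sh + Sv + Sp + Sm) := by
      have h1 : (n : ℝ) * n = ∑ y ∈ I, ∑ x ∈ I, (1 : ℝ) := by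
        simp [hcard]
      have h2 : ∑ y ∈ I, ∑ x ∈ I, (1 : ℝ) ≤
          ∑ y ∈ I, ∑ x ∈ I, (h y + v x + lp (x - y) + lm (x + y)) := by
        apply Finset.sum_le_sum
        intro y hy
        apply Finset.sum_le_sum
        intro x hx
        simp only [hI, Finset.mem_Icc] at hx hy
        exact hc x y hx.1 hx.2 hy.1 hy.2
      have h3 : ∀ y ∈ I, ∑ x ∈ I, lp (x - y) ≤ Sp := by
        intro y hy
        simp only [hI, Finset.mem_Icc] at hy
        have : ∑ x ∈ I, lp (x - y) = ∑ c ∈ Finset.Icc (0 + -y) ((n : ℤ) - 1 + -y), lp c := by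
          rw [← sum_shift]
          simp [sub_eq_add_neg, hI]
        rw [this]
        apply Finset.sum_le_sum_of_subset_of_nonneg
        · apply Finset.Icc_subset_Icc <;> omega
        · intro c hc' _
          exact hlp c hc'
      have h4 : ∀ y ∈ I, ∑ x ∈ I, lm (x + y) ≤ Sm := by
        intro y hy
        simp only [hI, Finset.mem_Icc] at hy
        have : ∑ x ∈ I, lm (x + y) = ∑ c ∈ Finset.Icc (0 + y) ((n : ℤ) - 1 + y), lm c := by
          rw [← sum_shift]
        rw [this]
        apply Finset.sum_le_sum_of_subset_of_nonneg
        · apply Finset.Icc_subset_Icc <;> omega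
        · intro c hc' _
          exact hlm c hc'
      have h5 : ∑ y ∈ I, ∑ x ∈ I, (h y + v x + lp (x - y) + lm (x + y)) ≤
          (n : ℝ) * (Sh + Sv + Sp + Sm) := by
        have : ∀ y ∈ I, ∑ x ∈ I, (h y + v x + lp (x - y) + lm (x + y)) ≤
            ((n : ℝ) * h y + Sv + Sp + Sm) := by
          intro y hy
          rw [Finset.sum_add_distrib, Finset.sum_add_distrib, Finset.sum_add_distrib]
          have e1 : ∑ x ∈ I, h y = (n : ℝ) * h y := by
            simp [hcard, mul_comm]
          rw [e1]
          gcongr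
          · exact h3 y hy
          · exact h4 y hy
        calc ∑ y ∈ I, ∑ x ∈ I, (h y + v x + lp (x - y) + lm (x + y))
            ≤ ∑ y ∈ I, ((n : ℝ) * h y + Sv + Sp + Sm) := Finset.sum_le_sum this
          _ = (n : ℝ) * (Sh + Sv + Sp + Sm) := by
              rw [Finset.sum_add_distrib, Finset.sum_add_distrib, Finset.sum_add_distrib,
                ← Finset.mul_sum]
              simp [hcard, Sh]
              ring
      linarith
    have hS : (n : ℝ) ≤ Sh + Sv + Sp + Sm := le_of_mul_le_mul_left (by linarith) hnpos
    linarith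
  · -- greatest lower bound: 2n is a member
    intro t ht
    apply ht
    refine ⟨fun _ => 1 / 2, fun _ => 1 / 2, 0, 0, ?_, ?_, ?_, ?_, ?_, ?_⟩
    · intro y _; norm_num
    · intro x _; norm_num
    · intro c _; simp
    · intro c _; simp
    · intro x y _ _ _ _; norm_num
    · simp [Finset.sum_const, hcard]
      ring
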